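/- Let n ∈ ℕ with n ≥ 2, let G be a nonempty bounded subset of ℝⁿ, and let γ₁, γ₂, γ₃ ∈ ℝ. Then the normed space (𝒦_{γ₁,γ₂,γ₃}(G), ‖·‖_{𝒦_{γ₁,γ₂,γ₃}(G)}) is complete: every sequence (K_m) of elements of 𝒦_{γ₁,γ₂,γ₃}(G) which is Cauchy with respect to ‖·‖_{𝒦_{γ₁,γ₂,γ₃}(G)} converges in this norm to some K ∈ 𝒦_{γ₁,γ₂,γ₃}(G). -/

import Mathlib

open Metric Set

/-- The set of values `‖x-y‖^γ₁ ‖K(x,y)‖` entering the first seminorm of the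
kernel class `𝒦_{γ₁,γ₂,γ₃}(G)`. -/
def kerSet1 {n : ℕ} (γ₁ : ℝ) (G : Set (EuclideanSpace ℝ (Fin n)))
    (K : EuclideanSpace ℝ (Fin n) × EuclideanSpace ℝ (Fin n) → ℂ) : Set ℝ :=
  {t | ∃ x ∈ G, ∃ y ∈ G, x ≠ y ∧ t = ‖x - y‖ ^ γ₁ * ‖K (x, y)‖}

/-- The set of values `(‖x'-y‖^γ₂/‖x'-x''‖^γ₃) ‖K(x',y) - K(x'',y)‖` entering the
second seminorm of the kernel class `𝒦_{γ₁,γ₂,γ₃}(G)`. -/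
def kerSet2 {n : ℕ} (γ₂ γ₃ : ℝ) (G : Set (EuclideanSpace ℝ (Fin n)))
    (K : EuclideanSpace ℝ (Fin n) × EuclideanSpace ℝ (Fin n) → ℂ) : Set ℝ :=
  {t | ∃ x' ∈ G, ∃ x'' ∈ G, ∃ y ∈ G, x' ≠ x'' ∧ 2 * ‖x' - x''‖ ≤ ‖x' - y‖ ∧
    t = ‖x' - y‖ ^ γ₂ / ‖x' - x''‖ ^ γ₃ * ‖K (x', y) - K (x'', y)‖}

/-- Membership in the kernel class `𝒦_{γ₁,γ₂,γ₃}(G)`: continuity off the diagonal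
and finiteness of the two seminorms. -/
def memKer {n : ℕ} (γ₁ γ₂ γ₃ : ℝ) (G : Set (EuclideanSpace ℝ (Fin n)))
    (K : EuclideanSpace ℝ (Fin n) × EuclideanSpace ℝ (Fin n) → ℂ) : Prop :=
  ContinuousOn K ((G ×ˢ G) \ {p | p.1 = p.2}) ∧
  BddAbove (kerSet1 γ₁ G K) ∧ BddAbove (kerSet2 γ₂ γ₃ G K)

/-- The norm `‖·‖_{𝒦_{γ₁,γ₂,γ₃}(G)}` of the kernel class. -/
noncomputable def kerNorm {n : ℕ} (γ₁ γ₂ γ₃ : ℝ) (G : Set (EuclideanSpace ℝ (Fin n)))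
    (K : EuclideanSpace ℝ (Fin n) × EuclideanSpace ℝ (Fin n) → ℂ) : ℝ :=
  sSup (kerSet1 γ₁ G K) + sSup (kerSet2 γ₂ γ₃ G K)

lemma kerSet1_nonneg {n : ℕ} (γ₁ : ℝ) (G : Set (EuclideanSpace ℝ (Fin n)))
    (J : EuclideanSpace ℝ (Fin n) × EuclideanSpace ℝ (Fin n) → ℂ) :
    ∀ t ∈ kerSet1 γ₁ G J, 0 ≤ t := by
  rintro t ⟨x, hx, y, hy, hxy, rfl⟩
  positivity

lemma kerSet2_nonneg {n : ℕ} (γ₂ γ₃ : ℝ) (G : Set (EuclideanSpace ℝ (Fin n)))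
    (J : EuclideanSpace ℝ (Fin n) × EuclideanSpace ℝ (Fin n) → ℂ) :
    ∀ t ∈ kerSet2 γ₂ γ₃ G J, 0 ≤ t := by
  rintro t ⟨x', hx', x'', hx'', y, hy, hne, hsep, rfl⟩
  positivity

lemma kerSet1_sub_bdd {n : ℕ} {γ₁ : ℝ} {G : Set (EuclideanSpace ℝ (Fin n))}
    {J₁ J₂ : EuclideanSpace ℝ (Fin n) × EuclideanSpace ℝ (Fin n) → ℂ}
    (h₁ : BddAbove (kerSet1 γ₁ G J₁)) (h₂ : BddAbove (kerSet1 γ₁ G J₂)) :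
    BddAbove (kerSet1 γ₁ G (J₁ - J₂)) := by
  refine ⟨sSup (kerSet1 γ₁ G J₁) + sSup (kerSet1 γ₁ G J₂), ?_⟩
  rintro t ⟨x, hx, y, hy, hxy, rfl⟩
  have hw : (0:ℝ) ≤ ‖x - y‖ ^ γ₁ := Real.rpow_nonneg (norm_nonneg _) _
  have hb1 : ‖x - y‖ ^ γ₁ * ‖J₁ (x, y)‖ ≤ sSup (kerSet1 γ₁ G J₁) :=
    le_csSup h₁ ⟨x, hx, y, hy, hxy, rfl⟩
  have hb2 : ‖x - y‖ ^ γ₁ * ‖J₂ (x, y)‖ ≤ sSup (kerSet1 γ₁ G J₂) :=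
    le_csSup h₂ ⟨x, hx, y, hy, hxy, rfl⟩
  calc ‖x - y‖ ^ γ₁ * ‖(J₁ - J₂) (x, y)‖
      ≤ ‖x - y‖ ^ γ₁ * (‖J₁ (x, y)‖ + ‖J₂ (x, y)‖) := by
        apply mul_le_mul_of_nonneg_left _ hw
        simpa [Pi.sub_apply] using norm_sub_le (J₁ (x, y)) (J₂ (x, y))
    _ = ‖x - y‖ ^ γ₁ * ‖J₁ (x, y)‖ + ‖x - y‖ ^ γ₁ * ‖J₂ (x, y)‖ := mul_add _ _ _
    _ ≤ _ := add_le_add hb1 hb2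

lemma kerSet2_sub_bdd {n : ℕ} {γ₂ γ₃ : ℝ} {G : Set (EuclideanSpace ℝ (Fin n))}
    {J₁ J₂ : EuclideanSpace ℝ (Fin n) × EuclideanSpace ℝ (Fin n) → ℂ}
    (h₁ : BddAbove (kerSet2 γ₂ γ₃ G J₁)) (h₂ : BddAbove (kerSet2 γ₂ γ₃ G J₂)) :
    BddAbove (kerSet2 γ₂ γ₃ G (J₁ - J₂)) := by
  refine ⟨sSup (kerSet2 γ₂ γ₃ G J₁) + sSup (kerSet2 γ₂ γ₃ G J₂), ?_⟩
  rintro t ⟨x', hx', x'', hx'', y, hy, hne, hsep, rfl⟩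
  have hw : (0:ℝ) ≤ ‖x' - y‖ ^ γ₂ / ‖x' - x''‖ ^ γ₃ := by positivity
  have hb1 : ‖x' - y‖ ^ γ₂ / ‖x' - x''‖ ^ γ₃ * ‖J₁ (x', y) - J₁ (x'', y)‖
      ≤ sSup (kerSet2 γ₂ γ₃ G J₁) :=
    le_csSup h₁ ⟨x', hx', x'', hx'', y, hy, hne, hsep, rfl⟩
  have hb2 : ‖x' - y‖ ^ γ₂ / ‖x' - x''‖ ^ γ₃ * ‖J₂ (x', y) - J₂ (x'', y)‖
      ≤ sSup (kerSet2 γ₂ γ₃ G J₂) :=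
    le_csSup h₂ ⟨x', hx', x'', hx'', y, hy, hne, hsep, rfl⟩
  calc ‖x' - y‖ ^ γ₂ / ‖x' - x''‖ ^ γ₃ * ‖(J₁ - J₂) (x', y) - (J₁ - J₂) (x'', y)‖
      ≤ ‖x' - y‖ ^ γ₂ / ‖x' - x''‖ ^ γ₃ *
        (‖J₁ (x', y) - J₁ (x'', y)‖ + ‖J₂ (x', y) - J₂ (x'', y)‖) := by
        apply mul_le_mul_of_nonneg_left _ hw
        have : (J₁ - J₂) (x', y) - (J₁ - J₂) (x'', y)
            = (J₁ (x', y) - J₁ (x'', y)) - (J₂ (x', y) - J₂ (x'', y)) := by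
          simp [Pi.sub_apply]; ring
        rw [this]
        exact norm_sub_le _ _
    _ = ‖x' - y‖ ^ γ₂ / ‖x' - x''‖ ^ γ₃ * ‖J₁ (x', y) - J₁ (x'', y)‖
        + ‖x' - y‖ ^ γ₂ / ‖x' - x''‖ ^ γ₃ * ‖J₂ (x', y) - J₂ (x'', y)‖ := mul_add _ _ _
    _ ≤ _ := add_le_add hb1 hb2

open Filter Topology in
/-- the space `(𝒦_{γ₁,γ₂,γ₃}(G), ‖·‖_{𝒦_{γ₁,γ₂,γ₃}(G)})` is complete:
every Cauchy sequence in the class converges in norm to an element of the class. -/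
theorem stmt_15 {n : ℕ} (hn : 2 ≤ n) (G : Set (EuclideanSpace ℝ (Fin n)))
    (hGne : G.Nonempty) (hGb : Bornology.IsBounded G) (γ₁ γ₂ γ₃ : ℝ)
    (K : ℕ → EuclideanSpace ℝ (Fin n) × EuclideanSpace ℝ (Fin n) → ℂ)
    (hK : ∀ m, memKer γ₁ γ₂ γ₃ G (K m))
    (hcauchy : ∀ ε : ℝ, 0 < ε → ∃ N : ℕ, ∀ p ≥ N, ∀ q ≥ N,
      kerNorm γ₁ γ₂ γ₃ G (K p - K q) < ε) :
    ∃ L : EuclideanSpace ℝ (Fin n) × EuclideanSpace ℝ (Fin n) → ℂ,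
      memKer γ₁ γ₂ γ₃ G L ∧
      ∀ ε : ℝ, 0 < ε → ∃ N : ℕ, ∀ p ≥ N, kerNorm γ₁ γ₂ γ₃ G (K p - L) < ε := by
  classical
  have hsup1_nonneg : ∀ J, (0:ℝ) ≤ sSup (kerSet1 γ₁ G J) :=
    fun J => Real.sSup_nonneg (kerSet1_nonneg γ₁ G J)
  have hsup2_nonneg : ∀ J, (0:ℝ) ≤ sSup (kerSet2 γ₂ γ₃ G J) :=
    fun J => Real.sSup_nonneg (kerSet2_nonneg γ₂ γ₃ G J)
  set L : EuclideanSpace ℝ (Fin n) × EuclideanSpace ℝ (Fin n) → ℂ :=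
    fun p => limUnder atTop (fun m => K m p) with hLdef
  -- pointwise convergence on the domain
  have htend : ∀ x ∈ G, ∀ y ∈ G, x ≠ y →
      Tendsto (fun m => K m (x, y)) atTop (𝓝 (L (x, y))) := by
    intro x hx y hy hxy
    have hw : 0 < ‖x - y‖ ^ γ₁ :=
      Real.rpow_pos_of_pos (norm_pos_iff.mpr (sub_ne_zero.mpr hxy)) _
    have hcs : CauchySeq (fun m => K m (x, y)) := by
      rw [Metric.cauchySeq_iff]
      intro ε hε
      obtain ⟨N, hN⟩ := hcauchy (ε * (‖x - y‖ ^ γ₁)) (by positivity)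
      refine ⟨N, fun p hp q hq => ?_⟩
      have hb := kerSet1_sub_bdd (hK p).2.1 (hK q).2.1
      have h1 : ‖x - y‖ ^ γ₁ * ‖(K p - K q) (x, y)‖ ≤ sSup (kerSet1 γ₁ G (K p - K q)) :=
        le_csSup hb ⟨x, hx, y, hy, hxy, rfl⟩
      have h2 : sSup (kerSet1 γ₁ G (K p - K q)) ≤ kerNorm γ₁ γ₂ γ₃ G (K p - K q) :=
        le_add_of_nonneg_right (hsup2_nonneg _)
      have h3 := (h1.trans h2).trans_lt (hN p hp q hq)
      rw [dist_eq_norm]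
      have h4 : ‖K p (x, y) - K q (x, y)‖ * (‖x - y‖ ^ γ₁) < ε * (‖x - y‖ ^ γ₁) := by
        rw [mul_comm]
        simpa [Pi.sub_apply] using h3
      exact lt_of_mul_lt_mul_right h4 hw.le
    obtain ⟨a, ha⟩ := cauchySeq_tendsto_of_complete hcs
    have hLa : L (x, y) = a := by simp only [hLdef]; exact ha.limUnder_eq
    rwa [hLa]
  -- the key estimate: the elements of the two kernel sets of `K m - L` become small
  have hkey : ∀ ε : ℝ, 0 < ε → ∃ N : ℕ, ∀ m ≥ N,
      (∀ t ∈ kerSet1 γ₁ G (K m - L), t ≤ ε) ∧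
      (∀ t ∈ kerSet2 γ₂ γ₃ G (K m - L), t ≤ ε) := by
    intro ε hε
    obtain ⟨N, hN⟩ := hcauchy ε hε
    refine ⟨N, fun m hm => ⟨?_, ?_⟩⟩
    · rintro t ⟨x, hx, y, hy, hxy, rfl⟩
      have hten : Tendsto (fun q => ‖x - y‖ ^ γ₁ * ‖(K m - K q) (x, y)‖) atTop
          (𝓝 (‖x - y‖ ^ γ₁ * ‖(K m - L) (x, y)‖)) := by
        have h0 : Tendsto (fun q => K m (x, y) - K q (x, y)) atTop
            (𝓝 (K m (x, y) - L (x, y))) :=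
          tendsto_const_nhds.sub (htend x hx y hy hxy)
        simpa [Pi.sub_apply] using h0.norm.const_mul (‖x - y‖ ^ γ₁)
      refine le_of_tendsto hten ?_
      filter_upwards [eventually_ge_atTop N] with q hq
      have hb := kerSet1_sub_bdd (hK m).2.1 (hK q).2.1
      have h1 : ‖x - y‖ ^ γ₁ * ‖(K m - K q) (x, y)‖ ≤ sSup (kerSet1 γ₁ G (K m - K q)) :=
        le_csSup hb ⟨x, hx, y, hy, hxy, rfl⟩
      exact h1.trans ((le_add_of_nonneg_right (hsup2_nonneg _)).trans (hN m hm q hq).le)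
    · rintro t ⟨x', hx', x'', hx'', y, hy, hne, hsep, rfl⟩
      have ha : 0 < ‖x' - x''‖ := norm_pos_iff.mpr (sub_ne_zero.mpr hne)
      have h1y : 0 < ‖x' - y‖ := lt_of_lt_of_le (by linarith) hsep
      have hx'y : x' ≠ y := sub_ne_zero.mp (norm_pos_iff.mp h1y)
      have htri : ‖x' - y‖ ≤ ‖x' - x''‖ + ‖x'' - y‖ := by
        have := dist_triangle x' x'' y
        simpa [dist_eq_norm] using this
      have h2y : 0 < ‖x'' - y‖ := by linarith
      have hx''y : x'' ≠ y := sub_ne_zero.mp (norm_pos_iff.mp h2y)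
      have hten : Tendsto
          (fun q => ‖x' - y‖ ^ γ₂ / ‖x' - x''‖ ^ γ₃ * ‖(K m - K q) (x', y) - (K m - K q) (x'', y)‖)
          atTop
          (𝓝 (‖x' - y‖ ^ γ₂ / ‖x' - x''‖ ^ γ₃ * ‖(K m - L) (x', y) - (K m - L) (x'', y)‖)) := by
        have t1 := htend x' hx' y hy hx'y
        have t2 := htend x'' hx'' y hy hx''y
        have h0 : Tendsto
            (fun q => (K m (x', y) - K q (x', y)) - (K m (x'', y) - K q (x'', y))) atTop
            (𝓝 ((K m (x', y) - L (x', y)) - (K m (x'', y) - L (x'', y)))) :=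
          (tendsto_const_nhds.sub t1).sub (tendsto_const_nhds.sub t2)
        simpa [Pi.sub_apply] using h0.norm.const_mul (‖x' - y‖ ^ γ₂ / ‖x' - x''‖ ^ γ₃)
      refine le_of_tendsto hten ?_
      filter_upwards [eventually_ge_atTop N] with q hq
      have hb := kerSet2_sub_bdd (hK m).2.2 (hK q).2.2
      have h1 : ‖x' - y‖ ^ γ₂ / ‖x' - x''‖ ^ γ₃ * ‖(K m - K q) (x', y) - (K m - K q) (x'', y)‖
          ≤ sSup (kerSet2 γ₂ γ₃ G (K m - K q)) :=
        le_csSup hb ⟨x', hx', x'', hx'', y, hy, hne, hsep, rfl⟩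
      exact h1.trans ((le_add_of_nonneg_left (hsup1_nonneg _)).trans (hN m hm q hq).le)
  -- boundedness of the two kernel sets of `L`
  obtain ⟨N₀, hN₀⟩ := hkey 1 one_pos
  have hbdd1 : BddAbove (kerSet1 γ₁ G L) := by
    refine ⟨sSup (kerSet1 γ₁ G (K N₀)) + 1, ?_⟩
    rintro t ⟨x, hx, y, hy, hxy, rfl⟩
    have hw : (0:ℝ) ≤ ‖x - y‖ ^ γ₁ := Real.rpow_nonneg (norm_nonneg _) _
    have h1 : ‖x - y‖ ^ γ₁ * ‖K N₀ (x, y)‖ ≤ sSup (kerSet1 γ₁ G (K N₀)) :=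
      le_csSup (hK N₀).2.1 ⟨x, hx, y, hy, hxy, rfl⟩
    have h2 : ‖x - y‖ ^ γ₁ * ‖(K N₀ - L) (x, y)‖ ≤ 1 :=
      (hN₀ N₀ le_rfl).1 _ ⟨x, hx, y, hy, hxy, rfl⟩
    have h3 : ‖L (x, y)‖ ≤ ‖K N₀ (x, y)‖ + ‖(K N₀ - L) (x, y)‖ := by
      rw [Pi.sub_apply]
      calc ‖L (x, y)‖ = ‖K N₀ (x, y) - (K N₀ (x, y) - L (x, y))‖ := by rw [sub_sub_cancel]
        _ ≤ _ := norm_sub_le _ _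
    calc ‖x - y‖ ^ γ₁ * ‖L (x, y)‖
        ≤ ‖x - y‖ ^ γ₁ * (‖K N₀ (x, y)‖ + ‖(K N₀ - L) (x, y)‖) :=
          mul_le_mul_of_nonneg_left h3 hw
      _ = ‖x - y‖ ^ γ₁ * ‖K N₀ (x, y)‖ + ‖x - y‖ ^ γ₁ * ‖(K N₀ - L) (x, y)‖ := mul_add _ _ _
      _ ≤ _ := add_le_add h1 h2
  have hbdd2 : BddAbove (kerSet2 γ₂ γ₃ G L) := by
    refine ⟨sSup (kerSet2 γ₂ γ₃ G (K N₀)) + 1, ?_⟩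
    rintro t ⟨x', hx', x'', hx'', y, hy, hne, hsep, rfl⟩
    have hw : (0:ℝ) ≤ ‖x' - y‖ ^ γ₂ / ‖x' - x''‖ ^ γ₃ := by positivity
    have h1 : ‖x' - y‖ ^ γ₂ / ‖x' - x''‖ ^ γ₃ * ‖K N₀ (x', y) - K N₀ (x'', y)‖
        ≤ sSup (kerSet2 γ₂ γ₃ G (K N₀)) :=
      le_csSup (hK N₀).2.2 ⟨x', hx', x'', hx'', y, hy, hne, hsep, rfl⟩
    have h2 : ‖x' - y‖ ^ γ₂ / ‖x' - x''‖ ^ γ₃ * ‖(K N₀ - L) (x', y) - (K N₀ - L) (x'', y)‖ ≤ 1 :=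
      (hN₀ N₀ le_rfl).2 _ ⟨x', hx', x'', hx'', y, hy, hne, hsep, rfl⟩
    have h3 : ‖L (x', y) - L (x'', y)‖
        ≤ ‖K N₀ (x', y) - K N₀ (x'', y)‖ + ‖(K N₀ - L) (x', y) - (K N₀ - L) (x'', y)‖ := by
      have heq : L (x', y) - L (x'', y)
          = (K N₀ (x', y) - K N₀ (x'', y)) - ((K N₀ - L) (x', y) - (K N₀ - L) (x'', y)) := by
        simp [Pi.sub_apply]; ring
      rw [heq]
      exact norm_sub_le _ _
    calc ‖x' - y‖ ^ γ₂ / ‖x' - x''‖ ^ γ₃ * ‖L (x', y) - L (x'', y)‖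
        ≤ ‖x' - y‖ ^ γ₂ / ‖x' - x''‖ ^ γ₃ *
          (‖K N₀ (x', y) - K N₀ (x'', y)‖ + ‖(K N₀ - L) (x', y) - (K N₀ - L) (x'', y)‖) :=
          mul_le_mul_of_nonneg_left h3 hw
      _ = ‖x' - y‖ ^ γ₂ / ‖x' - x''‖ ^ γ₃ * ‖K N₀ (x', y) - K N₀ (x'', y)‖
          + ‖x' - y‖ ^ γ₂ / ‖x' - x''‖ ^ γ₃ * ‖(K N₀ - L) (x', y) - (K N₀ - L) (x'', y)‖ :=
          mul_add _ _ _
      _ ≤ _ := add_le_add h1 h2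
  -- continuity of L off the diagonal
  obtain ⟨D, hD⟩ := Metric.isBounded_iff.mp hGb
  have hcont : ContinuousOn L ((G ×ˢ G) \ {p | p.1 = p.2}) := by
    intro p₀ hp₀
    have hp₀ne : p₀.1 ≠ p₀.2 := hp₀.2
    have hr : 0 < ‖p₀.1 - p₀.2‖ := norm_pos_iff.mpr (sub_ne_zero.mpr hp₀ne)
    set δ := ‖p₀.1 - p₀.2‖ / 2 with hδdef
    have hδ : 0 < δ := by positivity
    set U : Set (EuclideanSpace ℝ (Fin n) × EuclideanSpace ℝ (Fin n)) :=
      {p | δ < ‖p.1 - p.2‖} with hUdef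
    have hUopen : IsOpen U :=
      isOpen_lt continuous_const ((continuous_fst.sub continuous_snd).norm)
    have hp₀U : p₀ ∈ U := by
      simp only [hUdef, mem_setOf_eq, hδdef]
      linarith
    set M := max (δ ^ (-γ₁)) (D ^ (-γ₁)) with hMdef
    have hM : 0 < M := lt_of_lt_of_le (Real.rpow_pos_of_pos hδ _) (le_max_left _ _)
    have hunif : TendstoUniformlyOn (fun m p => K m p) L atTop
        (((G ×ˢ G) \ {p | p.1 = p.2}) ∩ U) := by
      rw [Metric.tendstoUniformlyOn_iff]
      intro ε hε
      obtain ⟨N, hN⟩ := hkey (ε / (2 * M)) (by positivity)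
      filter_upwards [eventually_ge_atTop N] with m hm
      rintro ⟨x, y⟩ ⟨⟨⟨hx, hy⟩, hne⟩, hU⟩
      have hxy : x ≠ y := hne
      have hxU : δ < ‖x - y‖ := hU
      have hxyn : 0 < ‖x - y‖ := hδ.trans hxU
      have hwpos : 0 < ‖x - y‖ ^ γ₁ := Real.rpow_pos_of_pos hxyn _
      have h1 : ‖x - y‖ ^ γ₁ * ‖(K m - L) (x, y)‖ ≤ ε / (2 * M) :=
        (hN m hm).1 _ ⟨x, hx, y, hy, hxy, rfl⟩
      have hinv : ‖x - y‖ ^ (-γ₁) ≤ M := by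
        rcases le_or_gt 0 (-γ₁) with h | h
        · refine le_trans (Real.rpow_le_rpow (norm_nonneg _) ?_ h) (le_max_right _ _)
          rw [← dist_eq_norm]
          exact hD hx hy
        · exact le_trans (Real.rpow_le_rpow_of_nonpos hδ hxU.le h.le) (le_max_left _ _)
      have h2 : ‖(K m - L) (x, y)‖ ≤ ε / (2 * M) * M := by
        calc ‖(K m - L) (x, y)‖
            = (‖x - y‖ ^ γ₁ * ‖(K m - L) (x, y)‖) * ‖x - y‖ ^ (-γ₁) := by
              rw [Real.rpow_neg (norm_nonneg _), mul_comm (‖x - y‖ ^ γ₁),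
                mul_assoc, mul_inv_cancel₀ hwpos.ne', mul_one]
          _ ≤ (ε / (2 * M)) * ‖x - y‖ ^ (-γ₁) :=
              mul_le_mul_of_nonneg_right h1 (Real.rpow_nonneg (norm_nonneg _) _)
          _ ≤ (ε / (2 * M)) * M :=
              mul_le_mul_of_nonneg_left hinv (by positivity)
      have h3 : ε / (2 * M) * M = ε / 2 := by
        field_simp
      rw [dist_eq_norm]
      have h4 : ‖L (x, y) - K m (x, y)‖ = ‖(K m - L) (x, y)‖ := by
        rw [Pi.sub_apply, norm_sub_rev]
      rw [h4]
      linarith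
    have hKcont : ∀ m : ℕ, ContinuousOn (K m) (((G ×ˢ G) \ {p | p.1 = p.2}) ∩ U) :=
      fun m => (hK m).1.mono inter_subset_left
    have hLcont : ContinuousOn L (((G ×ˢ G) \ {p | p.1 = p.2}) ∩ U) :=
      hunif.continuousOn (Eventually.of_forall hKcont).frequently
    exact (continuousWithinAt_inter (hUopen.mem_nhds hp₀U)).mp (hLcont p₀ ⟨hp₀, hp₀U⟩)
  refine ⟨L, ⟨hcont, hbdd1, hbdd2⟩, ?_⟩
  intro ε hε
  obtain ⟨N, hN⟩ := hkey (ε / 3) (by positivity)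
  refine ⟨N, fun m hm => ?_⟩
  have h1 : sSup (kerSet1 γ₁ G (K m - L)) ≤ ε / 3 :=
    Real.sSup_le (fun t ht => (hN m hm).1 t ht) (by positivity)
  have h2 : sSup (kerSet2 γ₂ γ₃ G (K m - L)) ≤ ε / 3 :=
    Real.sSup_le (fun t ht => (hN m hm).2 t ht) (by positivity)
  have h : kerNorm γ₁ γ₂ γ₃ G (K m - L) ≤ ε / 3 + ε / 3 := add_le_add h1 h2
  linarith
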